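/- For integers n ≥ 1 and k ≥ 1, ∑_{λ ∈ P_{n,k}} ∏_{i=1}^{ℓ(λ)-1} C(λ_i, λ_{i+1}) = C(n-1, k-1), where the sum is over all partitions λ = (λ_1, ..., λ_{ℓ}) of n with largest part λ_1 = k. -/

import Mathlib

open Finset

/-- The decreasing list of parts of a partition. -/
def plist {n : ℕ} (p : n.Partition) : List ℕ := p.parts.sort (· ≥ ·)

/-- `coef(λ) = ∏ C(λ_i, λ_{i+1})`. -/
def coefw (l : List ℕ) : ℕ :=
  ∏ i ∈ Finset.range (l.length - 1), (l.getD i 0).choose (l.getD (i + 1) 0)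

lemma plist_coe {n : ℕ} (p : n.Partition) : (↑(plist p) : Multiset ℕ) = p.parts :=
  Multiset.sort_eq _ _

lemma mem_plist {n : ℕ} {p : n.Partition} {a : ℕ} : a ∈ plist p ↔ a ∈ p.parts := by
  rw [← plist_coe p]; exact Iff.rfl

lemma plist_sorted {n : ℕ} (p : n.Partition) : (plist p).Pairwise (· ≥ ·) :=
  Multiset.pairwise_sort _ _

lemma plist_ne_nil {n : ℕ} (hn : 1 ≤ n) (p : n.Partition) : plist p ≠ [] := by
  intro h
  have hc := plist_coe p
  rw [h] at hc
  have h2 := p.parts_sum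
  rw [← hc] at h2
  simp at h2; omega

lemma coefw_cons (a : ℕ) (l : List ℕ) (hl : l ≠ []) :
    coefw (a :: l) = a.choose l.headI * coefw l := by
  obtain ⟨m, hm⟩ : ∃ m, l.length = m + 1 :=
    ⟨l.length - 1, by cases l with | nil => simp at hl | cons b t => simp⟩
  unfold coefw
  simp only [List.length_cons, hm, Nat.add_sub_cancel]
  have e1 : ∏ x ∈ range (m+1), ((a::l).getD x 0).choose ((a::l).getD (x+1) 0)
      = ∏ x ∈ range (m+1), ((a::l).getD x 0).choose (l.getD x 0) :=
    Finset.prod_congr rfl fun i _ => by simp [List.getD_cons_succ]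
  rw [e1, Finset.prod_range_succ' (fun i => ((a :: l).getD i 0).choose (l.getD i 0)) m,
    mul_comm]
  cases l with
  | nil => simp at hl
  | cons b t => simp [List.getD_cons_succ]

lemma headI_mem {l : List ℕ} (hl : l ≠ []) : l.headI ∈ l := by
  cases l with | nil => simp at hl | cons b t => simp

lemma head?_eq_headI {l : List ℕ} (hl : l ≠ []) : l.head? = some l.headI := by
  cases l with | nil => simp at hl | cons b t => simp

lemma le_of_head? {n : ℕ} {p : n.Partition} {k x : ℕ}
    (h : (plist p).head? = some k) (hx : x ∈ p.parts) : x ≤ k := by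
  rw [← mem_plist] at hx
  have hs := plist_sorted p
  cases hpl : plist p with
  | nil => rw [hpl] at h; simp at h
  | cons a t =>
    rw [hpl] at h hx hs
    simp only [List.head?_cons, Option.some_inj] at h
    subst h
    rw [List.pairwise_cons] at hs
    rcases List.mem_cons.1 hx with rfl | hxt
    · exact le_refl _
    · exact hs.1 x hxt

lemma head_mem {n : ℕ} {p : n.Partition} {k : ℕ}
    (h : (plist p).head? = some k) : k ∈ p.parts := by
  rw [← mem_plist]
  exact List.mem_of_mem_head? (by rw [h]; rfl)

lemma sum_parts_lemma {n : ℕ} (p : n.Partition) {k : ℕ} (hk : k ∈ p.parts) :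
    k + (p.parts.erase k).sum = n := by
  conv_rhs => rw [← p.parts_sum, ← Multiset.cons_erase hk]
  simp

lemma vand (k M : ℕ) (hk : 1 ≤ k) :
    ∑ i ∈ range k, k.choose (i+1) * M.choose i = (k+M).choose (k-1) := by
  rw [Nat.add_choose_eq, Finset.Nat.sum_antidiagonal_eq_sum_range_succ_mk]
  have h1 : k - 1 + 1 = k := Nat.succ_pred_eq_of_pos hk
  simp only [Nat.succ_eq_add_one]
  rw [h1, ← Finset.sum_range_reflect (fun i => k.choose i * M.choose (k-1-i)) k]
  refine Finset.sum_congr rfl fun i hi => ?_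
  simp only [mem_range] at hi
  have h2 : k - 1 - (k - 1 - i) = i := by omega
  have h3 : k - 1 - i = k - (i+1) := by omega
  rw [h2, h3, Nat.choose_symm (by omega)]

lemma main : ∀ n : ℕ, ∀ k : ℕ, 1 ≤ n → 1 ≤ k →
    (∑ p ∈ Finset.univ.filter
        (fun p : n.Partition => (plist p).head? = some k), coefw (plist p)) =
      (n - 1).choose (k - 1) := by
  intro n
  induction n using Nat.strong_induction_on with
  | _ n IH =>
  intro k hn hk
  rcases lt_trichotomy n k with hlt | rfl | hgt
  · -- k > n : empty sum, choose = 0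
    have he : (Finset.univ.filter
        (fun p : n.Partition => (plist p).head? = some k)) = ∅ := by
      rw [Finset.filter_eq_empty_iff]
      intro p _ hhead
      have hkm := head_mem hhead
      have := sum_parts_lemma p hkm
      omega
    rw [he, Finset.sum_empty, Nat.choose_eq_zero_of_lt (by omega)]
  · -- n = k : unique partition
    have hone : ∀ p : n.Partition, (plist p).head? = some n → p = Nat.Partition.indiscrete n := by
      intro p hp
      have hkm := head_mem hp
      have hsum := sum_parts_lemma p hkm
      have hzero : (p.parts.erase n).sum = 0 := by omega
      have herase : p.parts.erase n = 0 := by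
        by_contra hne
        obtain ⟨x, hx⟩ := Multiset.exists_mem_of_ne_zero hne
        have hxp : 0 < x := p.parts_pos (Multiset.mem_of_mem_erase hx)
        have : x ≤ (p.parts.erase n).sum :=
          Multiset.single_le_sum (fun y _ => Nat.zero_le y) x hx
        omega
      apply Nat.Partition.ext
      rw [Nat.Partition.indiscrete_parts (by omega), ← Multiset.cons_erase hkm, herase]
      rfl
    have hfe : (Finset.univ.filter
        (fun p : n.Partition => (plist p).head? = some n)) = {Nat.Partition.indiscrete n} := by
      apply Finset.eq_singleton_iff_unique_mem.2
      constructor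
      · rw [Finset.mem_filter]
        refine ⟨Finset.mem_univ _, ?_⟩
        unfold plist
        rw [Nat.Partition.indiscrete_parts (by omega), Multiset.sort_singleton]
        rfl
      · intro p hp
        exact hone p (Finset.mem_filter.1 hp).2
    rw [hfe, Finset.sum_singleton]
    have hpl : plist (Nat.Partition.indiscrete n) = [n] := by
      unfold plist
      rw [Nat.Partition.indiscrete_parts (by omega), Multiset.sort_singleton]
    rw [hpl, Nat.choose_self]
    simp [coefw]
  · -- k < n : induction step
    have hnk1 : 1 ≤ n - k := by omega
    have key : ∀ q : (n-k).Partition, (∀ x ∈ q.parts, x ≤ k) →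
        (k ::ₘ q.parts).sort (· ≥ ·) = k :: plist q := fun q hq =>
      Multiset.sort_cons k _ (· ≥ ·) (fun b hb => hq b hb)
    have step1 : (∑ p ∈ Finset.univ.filter
        (fun p : n.Partition => (plist p).head? = some k), coefw (plist p)) =
        ∑ q ∈ Finset.univ.filter (fun q : (n-k).Partition => ∀ x ∈ q.parts, x ≤ k),
          k.choose (plist q).headI * coefw (plist q) := by
      refine Finset.sum_bij'
        (i := fun p hp => ⟨p.parts.erase k,
          fun hx => p.parts_pos (Multiset.mem_of_mem_erase hx),
          by have := sum_parts_lemma p (head_mem (Finset.mem_filter.1 hp).2); omega⟩)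
        (j := fun q hq => ⟨k ::ₘ q.parts,
          fun hx => by
            rcases Multiset.mem_cons.1 hx with rfl | hx
            · omega
            · exact q.parts_pos hx,
          by have := q.parts_sum; simp only [Multiset.sum_cons, this]; omega⟩)
        ?_ ?_ ?_ ?_ ?_
      · -- hi : image in T
        intro p hp
        rw [Finset.mem_filter]
        refine ⟨Finset.mem_univ _, fun x hx => ?_⟩
        exact le_of_head? (Finset.mem_filter.1 hp).2 (Multiset.mem_of_mem_erase hx)
      · -- hj : image in S
        intro q hq
        rw [Finset.mem_filter]
        refine ⟨Finset.mem_univ _, ?_⟩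
        show ((k ::ₘ q.parts).sort (· ≥ ·)).head? = some k
        rw [key q (fun x hx => (Finset.mem_filter.1 hq).2 x hx)]
        rfl
      · -- left inverse
        intro p hp
        apply Nat.Partition.ext
        exact Multiset.cons_erase (head_mem (Finset.mem_filter.1 hp).2)
      · -- right inverse
        intro q hq
        apply Nat.Partition.ext
        exact Multiset.erase_cons_head k q.parts
      · -- values agree
        intro p hp
        have hkm := head_mem (Finset.mem_filter.1 hp).2
        have hall : ∀ x ∈ p.parts.erase k, x ≤ k := fun x hx =>
          le_of_head? (Finset.mem_filter.1 hp).2 (Multiset.mem_of_mem_erase hx)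
        have hplist : plist p = k :: (p.parts.erase k).sort (· ≥ ·) := by
          unfold plist
          conv_lhs => rw [← Multiset.cons_erase hkm]
          exact Multiset.sort_cons k _ (· ≥ ·) (fun b hb => hall b hb)
        have hne : (p.parts.erase k).sort (· ≥ ·) ≠ [] := by
          intro h
          have hsum := sum_parts_lemma p hkm
          have : (p.parts.erase k) = 0 := by
            have := Multiset.sort_eq (p.parts.erase k) (· ≥ ·)
            rw [h] at this
            simpa using this.symm
          rw [this] at hsum
          simp at hsum
          omega
        rw [show coefw (plist p) = coefw (k :: (p.parts.erase k).sort (· ≥ ·)) by rw [hplist],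
          coefw_cons _ _ hne]
        rfl
    rw [step1, ← Finset.sum_fiberwise_of_maps_to
      (g := fun q : (n-k).Partition => (plist q).headI) (t := range (k+1))
      (fun q hq => by
        show (plist q).headI ∈ Finset.range (k+1)
        rw [Finset.mem_range]
        have hne := plist_ne_nil hnk1 q
        have : (plist q).headI ≤ k :=
          (Finset.mem_filter.1 hq).2 _ (mem_plist.1 (headI_mem hne))
        omega)
      (fun q => k.choose (plist q).headI * coefw (plist q))]
    have step3 : ∀ j ∈ range (k+1),
        (∑ q ∈ (Finset.univ.filter (fun q : (n-k).Partition => ∀ x ∈ q.parts, x ≤ k)).filter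
          (fun q => (plist q).headI = j), k.choose (plist q).headI * coefw (plist q)) =
        if j = 0 then 0 else k.choose j * ((n - k - 1).choose (j - 1)) := by
      intro j hj
      rw [Finset.mem_range] at hj
      rcases Nat.eq_zero_or_pos j with rfl | hj1
      · rw [if_pos rfl]
        convert Finset.sum_empty
        rw [Finset.filter_eq_empty_iff]
        intro q hq hhead
        have hne := plist_ne_nil hnk1 q
        have := q.parts_pos (mem_plist.1 (headI_mem hne))
        omega
      · rw [if_neg (by omega)]
        have hfib : (Finset.univ.filter (fun q : (n-k).Partition => ∀ x ∈ q.parts, x ≤ k)).filter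
            (fun q => (plist q).headI = j) =
            Finset.univ.filter (fun q : (n-k).Partition => (plist q).head? = some j) := by
          ext q
          simp only [Finset.mem_filter, Finset.mem_univ, true_and]
          constructor
          · rintro ⟨hall, hhead⟩
            rw [head?_eq_headI (plist_ne_nil hnk1 q), hhead]
          · intro h
            have hhI : (plist q).headI = j := by
              have h2 := head?_eq_headI (plist_ne_nil hnk1 q)
              rw [h] at h2
              exact (Option.some_inj.1 h2).symm
            exact ⟨fun x hx => le_trans (le_of_head? h hx) (by omega), hhI⟩
        rw [hfib]
        have : ∀ q ∈ Finset.univ.filter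
            (fun q : (n-k).Partition => (plist q).head? = some j),
            k.choose (plist q).headI * coefw (plist q) = k.choose j * coefw (plist q) := by
          intro q hq
          have h := (Finset.mem_filter.1 hq).2
          have h2 := head?_eq_headI (plist_ne_nil hnk1 q)
          rw [h] at h2
          rw [← Option.some_inj.1 h2]
        rw [Finset.sum_congr rfl this, ← Finset.mul_sum,
          IH (n-k) (by omega) j hnk1 hj1]
    rw [Finset.sum_congr rfl step3, Finset.sum_range_succ'
      (fun j => if j = 0 then 0 else k.choose j * ((n - k - 1).choose (j - 1))) k]
    simp only [Nat.succ_ne_zero, if_neg, if_pos, Nat.add_sub_cancel, add_zero, reduceIte]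
    rw [vand k (n-k-1) hk]
    congr 1
    omega

theorem luschny_identity (n k : ℕ) (hn : 1 ≤ n) (hk : 1 ≤ k) :
    (∑ p ∈ Finset.univ.filter
        (fun p : n.Partition => (plist p).head? = some k), coefw (plist p)) =
      (n - 1).choose (k - 1) := main n k hn hk
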